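/- Let (S, μ) be a σ-finite measure space and let (Wₙ) be a sequence of non-negative symmetric integrable functions on S × S that satisfies sup_n ∫_{|Wₙ|>B} |Wₙ| dμ² → 0 as B → ∞ and is Cauchy for the cut norm. Then there exists a symmetric, non-negative, integrable function V on S × S with ‖Wₙ − V‖_□ → 0. -/

import Mathlib

open MeasureTheory Filter Topology Set
open scoped ENNReal NNReal

noncomputable def cutNorm {S : Type*} [MeasurableSpace S] (μ : Measure S)
    (F : S × S → ℝ) : ℝ :=
  ⨆ TU : {TU : Set S × Set S // MeasurableSet TU.1 ∧ MeasurableSet TU.2},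
    |∫ p in TU.1.1 ×ˢ TU.1.2, F p ∂(μ.prod μ)|

lemma abs_setIntegral_le {α : Type*} [MeasurableSpace α] {ν : Measure α} {f : α → ℝ}
    (hf : Integrable f ν) (s : Set α) : |∫ x in s, f x ∂ν| ≤ ∫ x, |f x| ∂ν := by
  calc |∫ x in s, f x ∂ν| ≤ ∫ x in s, |f x| ∂ν := by
        simpa using norm_integral_le_integral_norm (μ := ν.restrict s) f
    _ ≤ ∫ x, |f x| ∂ν :=
        setIntegral_le_integral hf.abs (ae_of_all _ fun x => abs_nonneg _)

lemma le_cutNorm {S : Type*} [MeasurableSpace S] (μ : Measure S) {F : S × S → ℝ}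
    (hF : Integrable F (μ.prod μ)) {T U : Set S} (hT : MeasurableSet T) (hU : MeasurableSet U) :
    |∫ p in T ×ˢ U, F p ∂(μ.prod μ)| ≤ cutNorm μ F := by
  have hbdd : BddAbove (Set.range fun TU : {TU : Set S × Set S // MeasurableSet TU.1 ∧ MeasurableSet TU.2} =>
      |∫ p in TU.1.1 ×ˢ TU.1.2, F p ∂(μ.prod μ)|) :=
    ⟨∫ p, |F p| ∂(μ.prod μ), Set.forall_mem_range.2 fun TU => abs_setIntegral_le hF _⟩
  exact le_ciSup hbdd ⟨(T, U), hT, hU⟩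

lemma cutNorm_le {S : Type*} [MeasurableSpace S] (μ : Measure S) {F : S × S → ℝ} {c : ℝ}
    (h : ∀ T U : Set S, MeasurableSet T → MeasurableSet U →
      |∫ p in T ×ˢ U, F p ∂(μ.prod μ)| ≤ c) : cutNorm μ F ≤ c := by
  have hc : 0 ≤ c := le_trans (by simp) (h ∅ ∅ .empty .empty)
  exact Real.iSup_le (fun TU => h _ _ TU.2.1 TU.2.2) hc

lemma cutNorm_nonneg {S : Type*} [MeasurableSpace S] (μ : Measure S) (F : S × S → ℝ) :
    0 ≤ cutNorm μ F :=
  Real.iSup_nonneg fun TU => abs_nonneg _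
theorem cutNorm_complete_of_nonneg_semiUI {S : Type*} [MeasurableSpace S]
    (μ : Measure S) [SigmaFinite μ]
    (W : ℕ → S × S → ℝ)
    (hpos : ∀ n p, 0 ≤ W n p)
    (hsymm : ∀ n x y, W n (x, y) = W n (y, x))
    (hint : ∀ n, Integrable (W n) (μ.prod μ))
    (htail : ∀ ε > (0:ℝ), ∃ B : ℝ, ∀ n,
      ∫ p in {p | B < |W n p|}, |W n p| ∂(μ.prod μ) < ε)
    (hcauchy : ∀ ε > (0:ℝ), ∃ N, ∀ m ≥ N, ∀ n ≥ N,
      cutNorm μ (fun p => W m p - W n p) < ε) :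
    ∃ V : S × S → ℝ, (∀ x y, V (x, y) = V (y, x)) ∧
      (∀ᵐ p ∂(μ.prod μ), 0 ≤ V p) ∧ Integrable V (μ.prod μ) ∧
      Tendsto (fun n => cutNorm μ (fun p => W n p - V p)) atTop (𝓝 0) := by
  classical
  set M : Measure (S × S) := μ.prod μ with hMdef
  -- measurable representatives
  set Wm : ℕ → S × S → ℝ := fun n => ((hint n).1.mk (W n)) with hWmdef
  have hWmeq : ∀ n, W n =ᵐ[M] Wm n := fun n => (hint n).1.ae_eq_mk
  have hWmmeas : ∀ n, Measurable (Wm n) := fun n => (hint n).1.stronglyMeasurable_mk.measurable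
  have hWmint : ∀ n, Integrable (Wm n) M := fun n => (hint n).congr (hWmeq n)
  have hWmnn : ∀ n, 0 ≤ᵐ[M] Wm n := by
    intro n
    filter_upwards [hWmeq n] with p hp
    rw [← hp]; exact hpos n p
  -- density measures
  set ρ : ℕ → Measure (S × S) := fun n => M.withDensity (fun p => ENNReal.ofReal (Wm n p))
    with hρdef
  have hρ : ∀ n {A : Set (S × S)}, MeasurableSet A →
      ρ n A = ∫⁻ p in A, ENNReal.ofReal (Wm n p) ∂M := fun n A hA => withDensity_apply _ hA
  have hρuniv : ∀ n, ρ n Set.univ = ENNReal.ofReal (∫ p, W n p ∂M) := by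
    intro n
    rw [hρ n MeasurableSet.univ, Measure.restrict_univ,
      ← ofReal_integral_eq_lintegral_ofReal (hWmint n) (hWmnn n)]
    exact congrArg _ (integral_congr_ae (hWmeq n).symm)
  have hρfin : ∀ n (A : Set (S × S)), ρ n A ≠ ⊤ := by
    intro n A
    refine ne_top_of_le_ne_top ?_ (measure_mono (Set.subset_univ A))
    rw [hρuniv n]; exact ENNReal.ofReal_ne_top
  have hs : ∀ n {A : Set (S × S)}, MeasurableSet A →
      ∫ p in A, W n p ∂M = (ρ n A).toReal := by
    intro n A hA
    rw [integral_congr_ae (ae_restrict_of_ae (hWmeq n)),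
      integral_eq_lintegral_of_nonneg_ae (ae_restrict_of_ae (hWmnn n))
        ((hWmmeas n).aestronglyMeasurable), hρ n hA]
  -- uniform bound on total mass
  set c : ℕ → ℝ := fun n => ∫ p, W n p ∂M with hcdef
  have hcnn : ∀ n, 0 ≤ c n := fun n => integral_nonneg (fun p => hpos n p)
  have hcdiff : ∀ m n, |c m - c n| ≤ cutNorm μ (fun p => W m p - W n p) := by
    intro m n
    have h := le_cutNorm (F := fun p => W m p - W n p) μ
      ((hint m).sub (hint n)) (T := Set.univ) (U := Set.univ)
      MeasurableSet.univ MeasurableSet.univ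
    rw [Set.univ_prod_univ, Measure.restrict_univ, ← hMdef,
      integral_sub (hint m) (hint n)] at h
    exact h
  obtain ⟨N₀, hN₀⟩ := hcauchy 1 one_pos
  set C : ℝ := (∑ i ∈ Finset.range (N₀ + 1), c i) + 1 with hCdef
  have hC : ∀ n, c n ≤ C := by
    intro n
    rcases le_or_gt n N₀ with h | h
    · have h1 : c n ≤ ∑ i ∈ Finset.range (N₀ + 1), c i :=
        Finset.single_le_sum (f := c) (fun i _ => hcnn i) (Finset.mem_range.2 (Nat.lt_succ_of_le h))
      simp only [hCdef]; linarith
    · have h1 : |c n - c N₀| < 1 := lt_of_le_of_lt (hcdiff n N₀) (hN₀ n h.le N₀ le_rfl)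
      have h2 := (abs_lt.1 h1).2
      have h3 : c N₀ ≤ ∑ i ∈ Finset.range (N₀ + 1), c i :=
        Finset.single_le_sum (f := c) (fun i _ => hcnn i) (Finset.mem_range.2 (Nat.lt_succ_self _))
      simp only [hCdef]; linarith
  have hsC : ∀ n (A : Set (S × S)), (ρ n A).toReal ∈ Set.Icc (0:ℝ) C := by
    intro n A
    refine ⟨ENNReal.toReal_nonneg, ?_⟩
    have h1 : ρ n A ≤ ρ n Set.univ := measure_mono (Set.subset_univ _)
    have h2 : (ρ n A).toReal ≤ (ρ n Set.univ).toReal :=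
      ENNReal.toReal_mono (by rw [hρuniv n]; exact ENNReal.ofReal_ne_top) h1
    have h3 : (ρ n Set.univ).toReal = c n := by
      rw [hρuniv n]; exact ENNReal.toReal_ofReal (hcnn n)
    rw [h3] at h2; exact h2.trans (hC n)
  -- ultrafilter limit
  set φ : Ultrafilter ℕ := Ultrafilter.of atTop with hφdef
  have hφ : (φ : Filter ℕ) ≤ atTop := Ultrafilter.of_le _
  have hex : ∀ A : Set (S × S), ∃ x, Tendsto (fun n => (ρ n A).toReal) (φ : Filter ℕ) (𝓝 x) := by
    intro A
    have hmem : Set.Icc (0:ℝ) C ∈ φ.map (fun n => (ρ n A).toReal) := by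
      rw [Ultrafilter.mem_map]
      exact Filter.univ_mem' fun n => hsC n A
    obtain ⟨x, -, hx⟩ := isCompact_Icc.ultrafilter_le_nhds
      (φ.map fun n => (ρ n A).toReal) (Filter.le_principal_iff.2 hmem)
    refine ⟨x, ?_⟩
    rw [Ultrafilter.coe_map] at hx
    exact hx
  choose ℓ hℓ using hex
  have hℓ_of : ∀ {A : Set (S × S)} {x : ℝ},
      Tendsto (fun n => (ρ n A).toReal) atTop (𝓝 x) → ℓ A = x :=
    fun h => tendsto_nhds_unique (hℓ _) (h.mono_left hφ)
  have hℓnn : ∀ A, 0 ≤ ℓ A := fun A => ge_of_tendsto' (hℓ A) (fun n => (hsC n A).1)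
  have hℓmono : ∀ A B : Set (S × S), A ⊆ B → ℓ A ≤ ℓ B := fun A B h =>
    le_of_tendsto_of_tendsto' (hℓ A) (hℓ B)
      (fun n => ENNReal.toReal_mono (hρfin n B) (measure_mono h))
  have hℓunion : ∀ {A B : Set (S × S)}, MeasurableSet B → Disjoint A B →
      ℓ (A ∪ B) = ℓ A + ℓ B := by
    intro A B hB hd
    refine tendsto_nhds_unique (hℓ _) ?_
    have he : ∀ n, (ρ n (A ∪ B)).toReal = (ρ n A).toReal + (ρ n B).toReal := by
      intro n
      rw [measure_union hd hB, ENNReal.toReal_add (hρfin _ _) (hρfin _ _)]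
    simpa only [he] using (hℓ A).add (hℓ B)
  -- the key uniform-smallness of tails of disjoint unions
  have hR_small : ∀ (f : ℕ → Set (S × S)), (∀ i, MeasurableSet (f i)) →
      Pairwise (Function.onFun Disjoint f) → ∀ ε > (0:ℝ), ∃ k, ℓ (⋃ i, ⋃ (_ : k ≤ i), f i) ≤ ε := by
    intro f hfm hfd ε hε
    set R : ℕ → Set (S × S) := fun k => ⋃ i, ⋃ (_ : k ≤ i), f i with hRdef
    have hRmeas : ∀ k, MeasurableSet (R k) :=
      fun k => MeasurableSet.iUnion fun i => MeasurableSet.iUnion fun _ => hfm i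
    have hRanti : Antitone R := by
      intro k k' hkk'
      refine Set.iUnion₂_subset fun i hi => ?_
      exact Set.subset_iUnion₂ (s := fun i _ => f i) i (hkk'.trans hi)
    have hRempty : (⋂ k, R k) = ∅ := by
      refine Set.eq_empty_iff_forall_notMem.2 fun p hp => ?_
      have h0 := Set.mem_iInter.1 hp 0
      simp only [hRdef, Set.mem_iUnion] at h0
      obtain ⟨i, _, hi⟩ := h0
      have h1 := Set.mem_iInter.1 hp (i + 1)
      simp only [hRdef, Set.mem_iUnion] at h1
      obtain ⟨j, hj, hjp⟩ := h1
      exact Set.disjoint_left.1 (hfd (show i ≠ j by omega)) hi hjp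
    -- tail bound from uniform integrability
    obtain ⟨B, hB⟩ := htail (ε/8) (by positivity)
    set B' : ℝ := |B| + 1 with hB'def
    have hB'pos : 0 < B' := by positivity
    have htail' : ∀ n, ∫⁻ p in {p | B' < Wm n p}, ENNReal.ofReal (Wm n p) ∂M
        ≤ ENNReal.ofReal (ε/8) := by
      intro n
      have hAm : MeasurableSet {p | B' < Wm n p} :=
        measurableSet_lt measurable_const (hWmmeas n)
      have e1 : ∫⁻ p in {p | B' < Wm n p}, ENNReal.ofReal (Wm n p) ∂M
          = ENNReal.ofReal (∫ p in {p | B' < Wm n p}, Wm n p ∂M) :=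
        (ofReal_integral_eq_lintegral_ofReal ((hWmint n).integrableOn)
          (ae_restrict_of_ae (hWmnn n))).symm
      rw [e1]
      refine ENNReal.ofReal_le_ofReal ?_
      have e2 : ∫ p in {p | B' < Wm n p}, Wm n p ∂M
          = ∫ p in {p | B' < Wm n p}, |W n p| ∂M := by
        refine integral_congr_ae ?_
        filter_upwards [ae_restrict_of_ae (hWmeq n), ae_restrict_mem hAm] with p hp hpA
        have hpos' : 0 < W n p := by rw [hp]; exact lt_trans hB'pos hpA
        rw [hp] at hpos' ⊢
        exact (abs_of_pos hpos').symm
      rw [e2]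
      have e3 : ∫ p in {p | B' < Wm n p}, |W n p| ∂M
          ≤ ∫ p in {p | B < |W n p|}, |W n p| ∂M := by
        refine setIntegral_mono_set ((hint n).abs.integrableOn)
          (ae_of_all _ fun p => abs_nonneg _) ?_
        filter_upwards [hWmeq n] with p hp
        intro hpA
        have h1 : B' < W n p := by rw [hp]; exact hpA
        have h2 : B ≤ B' := by
          calc B ≤ |B| := le_abs_self B
            _ ≤ B' := by rw [hB'def]; linarith
        calc B ≤ B' := h2
          _ < W n p := h1
          _ ≤ |W n p| := le_abs_self _
      exact e3.trans (hB n).le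
    have hsplit : ∀ n (A : Set (S × S)), MeasurableSet A →
        ρ n A ≤ ENNReal.ofReal B' * M A + ENNReal.ofReal (ε/8) := by
      intro n A hA
      have hAm : MeasurableSet {p | B' < Wm n p} :=
        measurableSet_lt measurable_const (hWmmeas n)
      rw [hρ n hA]
      have hpt : ∀ p, ENNReal.ofReal (Wm n p) ≤ ENNReal.ofReal B'
          + Set.indicator {p | B' < Wm n p} (fun p => ENNReal.ofReal (Wm n p)) p := by
        intro p
        by_cases h : B' < Wm n p
        · rw [Set.indicator_of_mem (show p ∈ {p | B' < Wm n p} from h)]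
          exact le_add_self
        · rw [Set.indicator_of_notMem (show p ∉ {p | B' < Wm n p} from h), add_zero]
          exact ENNReal.ofReal_le_ofReal (not_lt.1 h)
      calc ∫⁻ p in A, ENNReal.ofReal (Wm n p) ∂M
          ≤ ∫⁻ p in A, (ENNReal.ofReal B'
            + Set.indicator {p | B' < Wm n p} (fun p => ENNReal.ofReal (Wm n p)) p) ∂M :=
            lintegral_mono hpt
        _ = ENNReal.ofReal B' * M A
            + ∫⁻ p in A, Set.indicator {p | B' < Wm n p}
                (fun p => ENNReal.ofReal (Wm n p)) p ∂M := by
            rw [lintegral_add_left measurable_const, setLIntegral_const]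
        _ ≤ ENNReal.ofReal B' * M A
            + ∫⁻ p, Set.indicator {p | B' < Wm n p}
                (fun p => ENNReal.ofReal (Wm n p)) p ∂M :=
            add_le_add_right (setLIntegral_le_lintegral _ _) _
        _ = ENNReal.ofReal B' * M A
            + ∫⁻ p in {p | B' < Wm n p}, ENNReal.ofReal (Wm n p) ∂M := by
            rw [lintegral_indicator hAm]
        _ ≤ ENNReal.ofReal B' * M A + ENNReal.ofReal (ε/8) :=
            add_le_add_right (htail' n) _
    -- escape to infinity control via cut-norm Cauchy on rectangles
    obtain ⟨N, hN⟩ := hcauchy (ε/8) (by positivity)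
    have hrect : ∀ m ≥ N, ∀ (T U : Set S), MeasurableSet T → MeasurableSet U →
        (ρ m (T ×ˢ U)).toReal ≤ (ρ N (T ×ˢ U)).toReal + ε/8 := by
      intro m hm T U hT hU
      have h1 := le_cutNorm (F := fun p => W m p - W N p) μ
        ((hint m).sub (hint N)) hT hU
      rw [← hMdef, integral_sub (hint m).integrableOn (hint N).integrableOn,
        hs m (hT.prod hU), hs N (hT.prod hU)] at h1
      have h2 := (abs_le.1 (h1.trans (hN m hm N le_rfl).le)).2
      linarith
    have htendT : Tendsto (fun j => ((ρ N ((spanningSets μ j)ᶜ ×ˢ (Set.univ : Set S))).toReal))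
        atTop (𝓝 0) := by
      have h0 : Tendsto (fun j => ρ N ((spanningSets μ j)ᶜ ×ˢ (Set.univ : Set S)))
          atTop (𝓝 (ρ N (⋂ j, (spanningSets μ j)ᶜ ×ˢ (Set.univ : Set S)))) := by
        refine tendsto_measure_iInter_atTop
          (fun j => ((measurableSet_spanningSets μ j).compl.prod
            MeasurableSet.univ).nullMeasurableSet) ?_ ⟨0, hρfin N _⟩
        intro a b hab
        exact Set.prod_mono (Set.compl_subset_compl.2 (monotone_spanningSets μ hab))
          subset_rfl
      have hIeq : (⋂ j, (spanningSets μ j)ᶜ ×ˢ (Set.univ : Set S)) = (∅ : Set (S × S)) := by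
        refine Set.eq_empty_iff_forall_notMem.2 fun p hp => ?_
        obtain ⟨j, hj⟩ := Set.mem_iUnion.1
          (show p.1 ∈ ⋃ j, spanningSets μ j by
            rw [iUnion_spanningSets]; exact Set.mem_univ _)
        exact (Set.mem_iInter.1 hp j).1 hj
      rw [hIeq, measure_empty] at h0
      exact (ENNReal.tendsto_toReal (by simp)).comp h0
    have htendU : Tendsto (fun j => ((ρ N ((Set.univ : Set S) ×ˢ (spanningSets μ j)ᶜ)).toReal))
        atTop (𝓝 0) := by
      have h0 : Tendsto (fun j => ρ N ((Set.univ : Set S) ×ˢ (spanningSets μ j)ᶜ))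
          atTop (𝓝 (ρ N (⋂ j, (Set.univ : Set S) ×ˢ (spanningSets μ j)ᶜ))) := by
        refine tendsto_measure_iInter_atTop
          (fun j => (MeasurableSet.univ.prod
            (measurableSet_spanningSets μ j).compl).nullMeasurableSet) ?_ ⟨0, hρfin N _⟩
        intro a b hab
        exact Set.prod_mono subset_rfl (Set.compl_subset_compl.2 (monotone_spanningSets μ hab))
      have hIeq : (⋂ j, (Set.univ : Set S) ×ˢ (spanningSets μ j)ᶜ) = (∅ : Set (S × S)) := by
        refine Set.eq_empty_iff_forall_notMem.2 fun p hp => ?_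
        obtain ⟨j, hj⟩ := Set.mem_iUnion.1
          (show p.2 ∈ ⋃ j, spanningSets μ j by
            rw [iUnion_spanningSets]; exact Set.mem_univ _)
        exact (Set.mem_iInter.1 hp j).2 hj
      rw [hIeq, measure_empty] at h0
      exact (ENNReal.tendsto_toReal (by simp)).comp h0
    obtain ⟨j, hjT, hjU⟩ : ∃ j, (ρ N ((spanningSets μ j)ᶜ ×ˢ (Set.univ : Set S))).toReal ≤ ε/8
        ∧ (ρ N ((Set.univ : Set S) ×ˢ (spanningSets μ j)ᶜ)).toReal ≤ ε/8 := by
      have h1 : ∀ᶠ j in atTop, (ρ N ((spanningSets μ j)ᶜ ×ˢ (Set.univ : Set S))).toReal < ε/8 :=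
        htendT.eventually_lt_const (by positivity)
      have h2 : ∀ᶠ j in atTop, (ρ N ((Set.univ : Set S) ×ˢ (spanningSets μ j)ᶜ)).toReal < ε/8 :=
        htendU.eventually_lt_const (by positivity)
      obtain ⟨j, hj1, hj2⟩ := (h1.and h2).exists
      exact ⟨j, hj1.le, hj2.le⟩
    set G : Set (S × S) := spanningSets μ j ×ˢ spanningSets μ j with hGdef
    have hGmeas : MeasurableSet G :=
      (measurableSet_spanningSets μ j).prod (measurableSet_spanningSets μ j)
    have hGfin : M G ≠ ⊤ := by
      rw [hGdef, hMdef, Measure.prod_prod]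
      exact ENNReal.mul_ne_top (measure_spanningSets_lt_top μ j).ne
        (measure_spanningSets_lt_top μ j).ne
    obtain ⟨k, hk⟩ : ∃ k, ENNReal.ofReal B' * M (R k ∩ G) ≤ ENNReal.ofReal (ε/8) := by
      have h0 : Tendsto (fun k => M (R k ∩ G)) atTop (𝓝 (M (⋂ k, R k ∩ G))) := by
        refine tendsto_measure_iInter_atTop
          (fun k => ((hRmeas k).inter hGmeas).nullMeasurableSet)
          (fun a b hab => Set.inter_subset_inter_left _ (hRanti hab))
          ⟨0, ne_top_of_le_ne_top hGfin (measure_mono Set.inter_subset_right)⟩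
      have hIeq : (⋂ k, R k ∩ G) = (∅ : Set (S × S)) := by
        rw [← Set.iInter_inter, hRempty, Set.empty_inter]
      rw [hIeq, measure_empty] at h0
      have h1 : Tendsto (fun k => ENNReal.ofReal B' * M (R k ∩ G)) atTop (𝓝 0) := by
        have := ENNReal.Tendsto.const_mul (a := ENNReal.ofReal B') h0
          (Or.inr ENNReal.ofReal_ne_top)
        simpa using this
      have h2 : ∀ᶠ k in atTop, ENNReal.ofReal B' * M (R k ∩ G) < ENNReal.ofReal (ε/8) :=
        h1.eventually_lt_const (by simp; positivity)
      obtain ⟨k, hk⟩ := h2.exists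
      exact ⟨k, hk.le⟩
    refine ⟨k, ?_⟩
    have hcover : R k ⊆ (R k ∩ G) ∪ ((spanningSets μ j)ᶜ ×ˢ (Set.univ : Set S))
        ∪ ((Set.univ : Set S) ×ˢ (spanningSets μ j)ᶜ) := by
      intro p hp
      by_cases h1 : p.1 ∈ spanningSets μ j
      · by_cases h2 : p.2 ∈ spanningSets μ j
        · exact Or.inl (Or.inl ⟨hp, h1, h2⟩)
        · exact Or.inr ⟨Set.mem_univ _, h2⟩
      · exact Or.inl (Or.inr ⟨h1, Set.mem_univ _⟩)
    have hbound : ∀ m ≥ N, (ρ m (R k)).toReal ≤ ε*6/8 := by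
      intro m hm
      have hmono : ρ m (R k) ≤ ρ m (R k ∩ G)
          + ρ m ((spanningSets μ j)ᶜ ×ˢ (Set.univ : Set S))
          + ρ m ((Set.univ : Set S) ×ˢ (spanningSets μ j)ᶜ) :=
        le_trans (measure_mono hcover)
          (le_trans (measure_union_le _ _)
            (add_le_add_left (measure_union_le _ _) _))
      have ht1 : (ρ m (R k)).toReal ≤ (ρ m (R k ∩ G)).toReal
          + (ρ m ((spanningSets μ j)ᶜ ×ˢ (Set.univ : Set S))).toReal
          + (ρ m ((Set.univ : Set S) ×ˢ (spanningSets μ j)ᶜ)).toReal := by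
        have hne : ρ m (R k ∩ G) + ρ m ((spanningSets μ j)ᶜ ×ˢ (Set.univ : Set S))
            + ρ m ((Set.univ : Set S) ×ˢ (spanningSets μ j)ᶜ) ≠ ⊤ := by
          simp [ENNReal.add_ne_top, hρfin]
        have := ENNReal.toReal_mono hne hmono
        rwa [ENNReal.toReal_add (by simp [ENNReal.add_ne_top, hρfin]) (hρfin _ _),
          ENNReal.toReal_add (hρfin _ _) (hρfin _ _)] at this
      have hb1 : (ρ m (R k ∩ G)).toReal ≤ ε/4 := by
        have h1 : ρ m (R k ∩ G) ≤ ENNReal.ofReal (ε/8) + ENNReal.ofReal (ε/8) :=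
          le_trans (hsplit m _ ((hRmeas k).inter hGmeas)) (add_le_add_left hk _)
        have h2 := ENNReal.toReal_mono
          (by simp [ENNReal.add_ne_top]) h1
        rwa [← ENNReal.ofReal_add (by positivity) (by positivity),
          ENNReal.toReal_ofReal (by positivity),
          show ε/8 + ε/8 = ε/4 by ring] at h2
      have hb2 : (ρ m ((spanningSets μ j)ᶜ ×ˢ (Set.univ : Set S))).toReal ≤ ε/4 := by
        have := hrect m hm ((spanningSets μ j)ᶜ) Set.univ
          (measurableSet_spanningSets μ j).compl MeasurableSet.univ
        linarith
      have hb3 : (ρ m ((Set.univ : Set S) ×ˢ (spanningSets μ j)ᶜ)).toReal ≤ ε/4 := by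
        have := hrect m hm Set.univ ((spanningSets μ j)ᶜ)
          MeasurableSet.univ (measurableSet_spanningSets μ j).compl
        linarith
      linarith
    have hfinal : ℓ (R k) ≤ ε*6/8 := by
      refine le_of_tendsto (hℓ (R k)) ?_
      refine Filter.Eventually.filter_mono hφ ?_
      filter_upwards [Filter.eventually_ge_atTop N] with m hm
      exact hbound m hm
    calc ℓ (R k) ≤ ε*6/8 := hfinal
      _ ≤ ε := by linarith
  -- construction of the limit measure
  have hcadd : ∀ (f : ℕ → Set (S × S)), (∀ i, MeasurableSet (f i)) →
      Pairwise (Function.onFun Disjoint f) →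
      ENNReal.ofReal (ℓ (⋃ i, f i)) = ∑' i, ENNReal.ofReal (ℓ (f i)) := by
    intro f hfm hfd
    have hfin : ∀ k, ℓ (⋃ i ∈ Finset.range k, f i) = ∑ i ∈ Finset.range k, ℓ (f i) := by
      intro k
      refine tendsto_nhds_unique (hℓ _) ?_
      have he : ∀ n, (ρ n (⋃ i ∈ Finset.range k, f i)).toReal
          = ∑ i ∈ Finset.range k, (ρ n (f i)).toReal := by
        intro n
        rw [measure_biUnion_finset (fun i _ j _ hij => hfd hij) (fun i _ => hfm i),
          ENNReal.toReal_sum (fun i _ => hρfin n _)]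
      simp only [he]
      exact tendsto_finset_sum _ fun i _ => hℓ (f i)
    have hsplitset : ∀ k, (⋃ i, f i)
        = (⋃ i ∈ Finset.range k, f i) ∪ (⋃ i, ⋃ (_ : k ≤ i), f i) := by
      intro k
      ext p
      simp only [Set.mem_iUnion, Set.mem_union, Finset.mem_range]
      constructor
      · rintro ⟨i, hi⟩
        rcases lt_or_ge i k with h | h
        · exact Or.inl ⟨i, h, hi⟩
        · exact Or.inr ⟨i, h, hi⟩
      · rintro (⟨i, _, hi⟩ | ⟨i, _, hi⟩) <;> exact ⟨i, hi⟩
    have hRmeas : ∀ k, MeasurableSet (⋃ i, ⋃ (_ : k ≤ i), f i) :=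
      fun k => MeasurableSet.iUnion fun i => MeasurableSet.iUnion fun _ => hfm i
    have hdisj : ∀ k, Disjoint (⋃ i ∈ Finset.range k, f i) (⋃ i, ⋃ (_ : k ≤ i), f i) := by
      intro k
      rw [Set.disjoint_left]
      rintro p hp hq
      simp only [Set.mem_iUnion, Finset.mem_range] at hp hq
      obtain ⟨i, hik, hpi⟩ := hp
      obtain ⟨j, hjk, hpj⟩ := hq
      have hij : i ≠ j := by omega
      exact Set.disjoint_left.1 (hfd hij) hpi hpj
    have hdecomp : ∀ k, ℓ (⋃ i, f i)
        = (∑ i ∈ Finset.range k, ℓ (f i)) + ℓ (⋃ i, ⋃ (_ : k ≤ i), f i) := by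
      intro k
      rw [hsplitset k, hℓunion (hRmeas k) (hdisj k), hfin k]
    refine le_antisymm ?_ ?_
    · by_cases htop : (∑' i, ENNReal.ofReal (ℓ (f i))) = ⊤
      · rw [htop]; exact le_top
      refine ENNReal.le_of_forall_pos_le_add ?_
      intro ε hε _
      obtain ⟨k, hk⟩ := hR_small f hfm hfd (ε : ℝ) (by exact_mod_cast hε)
      calc ENNReal.ofReal (ℓ (⋃ i, f i))
          = ENNReal.ofReal ((∑ i ∈ Finset.range k, ℓ (f i))
              + ℓ (⋃ i, ⋃ (_ : k ≤ i), f i)) := by rw [hdecomp k]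
        _ ≤ ENNReal.ofReal (∑ i ∈ Finset.range k, ℓ (f i))
              + ENNReal.ofReal (ℓ (⋃ i, ⋃ (_ : k ≤ i), f i)) :=
            ENNReal.ofReal_add_le
        _ ≤ (∑' i, ENNReal.ofReal (ℓ (f i))) + (ε : ℝ≥0∞) := by
            gcongr
            · rw [ENNReal.ofReal_sum_of_nonneg (fun i _ => hℓnn _)]
              exact ENNReal.sum_le_tsum _
            · exact (ENNReal.ofReal_le_ofReal hk).trans (by simp)
    · rw [ENNReal.tsum_eq_iSup_sum]
      refine iSup_le fun s => ?_
      obtain ⟨k, hk⟩ : ∃ k, s ⊆ Finset.range k := ⟨(s.sup id) + 1, fun i hi =>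
        Finset.mem_range.2 (Nat.lt_succ_of_le (Finset.le_sup (f := id) hi))⟩
      calc ∑ i ∈ s, ENNReal.ofReal (ℓ (f i))
          ≤ ∑ i ∈ Finset.range k, ENNReal.ofReal (ℓ (f i)) :=
            Finset.sum_le_sum_of_subset hk
        _ = ENNReal.ofReal (∑ i ∈ Finset.range k, ℓ (f i)) :=
            (ENNReal.ofReal_sum_of_nonneg (fun i _ => hℓnn _)).symm
        _ ≤ ENNReal.ofReal (ℓ (⋃ i, f i)) := by
            refine ENNReal.ofReal_le_ofReal ?_
            rw [← hfin k]
            exact hℓmono _ _ (Set.iUnion₂_subset fun i _ => Set.subset_iUnion f i)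
  set ν : Measure (S × S) := Measure.ofMeasurable (fun A _ => ENNReal.ofReal (ℓ A))
    (by
      have h0 : ℓ (∅ : Set (S × S)) = 0 := hℓ_of (by simp)
      simp [h0])
    (fun f hfm hfd => hcadd f hfm hfd) with hνdef
  have hν : ∀ {A : Set (S × S)}, MeasurableSet A → ν A = ENNReal.ofReal (ℓ A) :=
    fun {A} hA => Measure.ofMeasurable_apply A hA
  have hνfin : IsFiniteMeasure ν := ⟨by rw [hν MeasurableSet.univ]; exact ENNReal.ofReal_lt_top⟩
  have hac : ν ≪ M := by
    refine Measure.AbsolutelyContinuous.mk (fun A hA h0 => ?_)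
    have hz : ∀ n, ρ n A = 0 := fun n => (withDensity_absolutelyContinuous M _) h0
    have : ℓ A = 0 := hℓ_of (by simp [hz])
    rw [hν hA, this]; simp
  -- the limit function
  set V₀ : S × S → ℝ := fun p => (ν.rnDeriv M p).toReal with hV₀def
  have hV₀int : Integrable V₀ M := Measure.integrable_toReal_rnDeriv
  have hV₀set : ∀ A : Set (S × S), ∫ p in A, V₀ p ∂M = (ν A).toReal :=
    fun A => Measure.setIntegral_toReal_rnDeriv hac A
  have hswap : MeasurePreserving Prod.swap M M := Measure.measurePreserving_swap
  have hemb : MeasurableEmbedding (Prod.swap : S × S → S × S) :=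
    MeasurableEquiv.prodComm.measurableEmbedding
  have hV₀swapint : Integrable (fun p : S × S => V₀ p.swap) M :=
    (hswap.integrable_comp_emb hemb).2 hV₀int
  set V : S × S → ℝ := fun p => (V₀ p + V₀ p.swap) / 2 with hVdef
  have hVint : Integrable V M := (hV₀int.add hV₀swapint).div_const 2
  -- rectangle values of V
  have hVrect : ∀ T U : Set S, MeasurableSet T → MeasurableSet U →
      ∫ p in T ×ˢ U, V p ∂M = ℓ (T ×ˢ U) := by
    intro T U hT hU
    have hTU : MeasurableSet (T ×ˢ U) := hT.prod hU
    have hUT : MeasurableSet (U ×ˢ T) := hU.prod hT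
    have hswappre : (Prod.swap : S × S → S × S) ⁻¹' (U ×ˢ T) = T ×ˢ U := by
      ext ⟨x, y⟩
      simp [and_comm]
    have h1 : ∫ p in T ×ˢ U, V₀ p ∂M = ℓ (T ×ˢ U) := by
      rw [hV₀set, hν hTU, ENNReal.toReal_ofReal (hℓnn _)]
    have h2 : ∫ p in T ×ˢ U, V₀ p.swap ∂M = ℓ (U ×ˢ T) := by
      have h := hswap.setIntegral_preimage_emb hemb V₀ (U ×ˢ T)
      rw [hswappre] at h
      rw [h, hV₀set, hν hUT, ENNReal.toReal_ofReal (hℓnn _)]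
    have hsymρ : ∀ n, ρ n (U ×ˢ T) = ρ n (T ×ˢ U) := by
      intro n
      have hws : (fun p : S × S => W n p.swap) = W n := by
        funext p
        cases p with
        | mk x y => exact hsymm n y x
      have haen : (fun p : S × S => Wm n p.swap) =ᵐ[M] Wm n := by
        have ha : (fun p : S × S => Wm n p.swap) =ᵐ[M] (fun p : S × S => W n p.swap) :=
          hswap.quasiMeasurePreserving.ae_eq_comp ((hWmeq n).symm)
        rw [hws] at ha
        exact ha.trans (hWmeq n)
      rw [hρ n hUT, hρ n hTU]
      have hcomp := hswap.setLIntegral_comp_preimage_emb hemb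
        (fun p => ENNReal.ofReal (Wm n p)) (U ×ˢ T)
      rw [hswappre] at hcomp
      rw [← hcomp]
      refine lintegral_congr_ae (ae_restrict_of_ae ?_)
      filter_upwards [haen] with p hp
      rw [show Wm n p.swap = Wm n p from hp]
    have hℓsym : ℓ (U ×ˢ T) = ℓ (T ×ˢ U) :=
      tendsto_nhds_unique (hℓ _) (by simp only [hsymρ]; exact hℓ (T ×ˢ U))
    calc ∫ p in T ×ˢ U, V p ∂M
        = (∫ p in T ×ˢ U, V₀ p ∂M + ∫ p in T ×ˢ U, V₀ p.swap ∂M) / 2 := by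
          simp only [hVdef]
          rw [integral_div, integral_add hV₀int.integrableOn hV₀swapint.integrableOn]
      _ = (ℓ (T ×ˢ U) + ℓ (U ×ˢ T)) / 2 := by rw [h1, h2]
      _ = ℓ (T ×ˢ U) := by rw [hℓsym]; ring
  refine ⟨V, ?_, ?_, hVint, ?_⟩
  · intro x y
    simp only [hVdef, Prod.swap_prod_mk]
    ring
  · exact ae_of_all _ fun p => by positivity
  · -- final convergence
    refine Metric.tendsto_atTop.2 ?_
    intro ε hε
    obtain ⟨N, hN⟩ := hcauchy (ε/2) (by positivity)
    refine ⟨N, fun n hn => ?_⟩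
    have hb : cutNorm μ (fun p => W n p - V p) ≤ ε/2 := by
      refine cutNorm_le μ ?_
      intro T U hT hU
      have hTU : MeasurableSet (T ×ˢ U) := hT.prod hU
      show |∫ p in T ×ˢ U, (W n p - V p) ∂(μ.prod μ)| ≤ ε/2
      have hsub : ∫ p in T ×ˢ U, (W n p - V p) ∂(μ.prod μ)
          = (ρ n (T ×ˢ U)).toReal - ℓ (T ×ˢ U) := by
        rw [← hMdef, integral_sub (hint n).integrableOn hVint.integrableOn,
          hs n hTU, hVrect T U hT hU]
      rw [hsub]
      have hIcc : ℓ (T ×ˢ U) ∈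
          Set.Icc ((ρ n (T ×ˢ U)).toReal - ε/2) ((ρ n (T ×ˢ U)).toReal + ε/2) := by
        refine IsClosed.mem_of_tendsto isClosed_Icc (hℓ (T ×ˢ U)) ?_
        refine Filter.Eventually.filter_mono hφ ?_
        filter_upwards [Filter.eventually_ge_atTop N] with m hm
        have h1 := le_cutNorm (F := fun p => W m p - W n p) μ
          ((hint m).sub (hint n)) hT hU
        rw [← hMdef, integral_sub (hint m).integrableOn (hint n).integrableOn,
          hs m hTU, hs n hTU] at h1
        have h3 := abs_le.1 (h1.trans (hN m hm n hn).le)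
        constructor <;> [linarith [h3.1]; linarith [h3.2]]
      rw [Set.mem_Icc] at hIcc
      rw [abs_le]
      constructor <;> [linarith [hIcc.2]; linarith [hIcc.1]]
    have h0 := cutNorm_nonneg μ (fun p => W n p - V p)
    rw [Real.dist_eq, sub_zero, abs_of_nonneg h0]
    linarith
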